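/- Let g(s) = s·arcsinh(s) − √(1+s²), M > 1, and u(x,y) := e^{−M} cos(y) · g(e^M x / cos(y)) on the square Q = (−1,1)². Then det D²u = 1 on Q (i.e., u_xx u_yy − u_xy² = 1). -/

import Mathlib

open Real

private lemma hasDerivAt_gfun (t : ℝ) :
    HasDerivAt (fun s : ℝ => s * Real.arsinh s - Real.sqrt (1 + s ^ 2))
      (Real.arsinh t) t := by
  have h1 : HasDerivAt (fun s : ℝ => s * Real.arsinh s)
      (1 * Real.arsinh t + t * (Real.sqrt (1 + t ^ 2))⁻¹) t :=
    (hasDerivAt_id t).mul (Real.hasDerivAt_arsinh t)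
  have h2 : HasDerivAt (fun s : ℝ => 1 + s ^ 2) (2 * t) t := by
    simpa using (hasDerivAt_pow 2 t).const_add 1
  have h3 : HasDerivAt (fun s : ℝ => Real.sqrt (1 + s ^ 2))
      (2 * t / (2 * Real.sqrt (1 + t ^ 2))) t :=
    h2.sqrt (by positivity)
  have h := h1.sub h3
  refine h.congr_deriv ?_
  have hs : Real.sqrt (1 + t ^ 2) ≠ 0 := by positivity
  field_simp
  ring

set_option maxHeartbeats 1000000 in
theorem stmt12 (M : ℝ) (hM : 1 < M)
    (g : ℝ → ℝ) (hg : ∀ s, g s = s * Real.arsinh s - Real.sqrt (1 + s ^ 2))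
    (u : ℝ → ℝ → ℝ)
    (hu : ∀ x y, u x y =
      Real.exp (-M) * Real.cos y * g (Real.exp M * x / Real.cos y)) :
    ∀ x ∈ Set.Ioo (-1 : ℝ) 1, ∀ y ∈ Set.Ioo (-1 : ℝ) 1,
      (deriv (fun a => deriv (fun b => u b y) a) x) *
        (deriv (fun a => deriv (fun b => u x b) a) y) -
        (deriv (fun a => deriv (fun b => u a b) y) x) ^ 2 = 1 := by
  intro x hx y hy
  set c := Real.exp M with hc
  set e := Real.exp (-M) with he
  have hce : c * e = 1 := by
    rw [hc, he, ← Real.exp_add]; simp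
  have hc0 : 0 < c := Real.exp_pos M
  have he0 : 0 < e := Real.exp_pos (-M)
  have hpi : (1 : ℝ) < π / 2 := by
    have := Real.pi_gt_three; linarith
  have hcospos : ∀ t : ℝ, t ∈ Set.Ioo (-1 : ℝ) 1 → 0 < Real.cos t := by
    intro t ht
    exact Real.cos_pos_of_mem_Ioo ⟨by linarith [ht.1], by linarith [ht.2]⟩
  have hcy : 0 < Real.cos y := hcospos y hy
  have hcy' : Real.cos y ≠ 0 := ne_of_gt hcy
  have hux : ∀ a : ℝ, HasDerivAt (fun b => u b y) (Real.arsinh (c * a / Real.cos y)) a := by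
    intro a
    have hlin : HasDerivAt (fun b : ℝ => c * b / Real.cos y) (c / Real.cos y) a := by
      simpa [mul_div_assoc] using ((hasDerivAt_id a).const_mul c).div_const (Real.cos y)
    have hcomp : HasDerivAt
        (fun b : ℝ => (c * b / Real.cos y) * Real.arsinh (c * b / Real.cos y)
          - Real.sqrt (1 + (c * b / Real.cos y) ^ 2))
        (Real.arsinh (c * a / Real.cos y) * (c / Real.cos y)) a :=
      by have := (hasDerivAt_gfun (c * a / Real.cos y)).comp a hlin; exact this
    have hmul := hcomp.const_mul (e * Real.cos y)
    have hfun : (fun b => u b y) = fun b =>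
        e * Real.cos y * ((c * b / Real.cos y) * Real.arsinh (c * b / Real.cos y)
          - Real.sqrt (1 + (c * b / Real.cos y) ^ 2)) := by
      funext b; rw [hu, hg]
    rw [hfun]
    refine hmul.congr_deriv ?_
    have hq : e * Real.cos y * (Real.arsinh (c * a / Real.cos y) * (c / Real.cos y))
        = (c * e) * Real.arsinh (c * a / Real.cos y) := by
      field_simp
    rw [hq, hce, one_mul]
  have huy : ∀ (a b : ℝ), 0 < Real.cos b →
      HasDerivAt (fun t => u a t)
        (e * Real.sin b * Real.sqrt (1 + (c * a / Real.cos b) ^ 2)) b := by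
    intro a b hcb
    have hcb' : Real.cos b ≠ 0 := ne_of_gt hcb
    have hinv : HasDerivAt (fun t : ℝ => (Real.cos t)⁻¹)
        (Real.sin b / Real.cos b ^ 2) b := by
      have := (Real.hasDerivAt_cos b).inv hcb'
      refine this.congr_deriv ?_
      field_simp
    have hinner : HasDerivAt (fun t : ℝ => c * a / Real.cos t)
        (c * a * (Real.sin b / Real.cos b ^ 2)) b := by
      simpa [div_eq_mul_inv] using hinv.const_mul (c * a)
    have hcomp : HasDerivAt
        (fun t : ℝ => (c * a / Real.cos t) * Real.arsinh (c * a / Real.cos t)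
          - Real.sqrt (1 + (c * a / Real.cos t) ^ 2))
        (Real.arsinh (c * a / Real.cos b) * (c * a * (Real.sin b / Real.cos b ^ 2))) b :=
      by have := (hasDerivAt_gfun (c * a / Real.cos b)).comp b hinner; exact this
    have hcos : HasDerivAt (fun t : ℝ => e * Real.cos t) (e * (-Real.sin b)) b :=
      (Real.hasDerivAt_cos b).const_mul e
    have hmul := hcos.fun_mul hcomp
    have hfun : (fun t => u a t) = fun t =>
        (e * Real.cos t) * ((c * a / Real.cos t) * Real.arsinh (c * a / Real.cos t)
          - Real.sqrt (1 + (c * a / Real.cos t) ^ 2)) := by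
      funext t; rw [hu, hg]
    rw [hfun]
    refine hmul.congr_deriv ?_
    field_simp
    ring
  have hS0 : (0:ℝ) < Real.sqrt (1 + (c * x / Real.cos y) ^ 2) := by positivity
  set s := c * x / Real.cos y with hsdef
  set S := Real.sqrt (1 + s ^ 2) with hSdef
  have hS' : S ≠ 0 := ne_of_gt hS0
  have hSsq : S ^ 2 = 1 + s ^ 2 := Real.sq_sqrt (by positivity)
  have h1 : deriv (fun a => deriv (fun b => u b y) a) x = (c / Real.cos y) * S⁻¹ := by
    have hfn : (fun a => deriv (fun b => u b y) a)
        = fun a => Real.arsinh (c * a / Real.cos y) := by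
      funext a; exact (hux a).deriv
    rw [hfn]
    have hlin : HasDerivAt (fun a : ℝ => c * a / Real.cos y) (c / Real.cos y) x := by
      simpa [mul_div_assoc] using ((hasDerivAt_id x).const_mul c).div_const (Real.cos y)
    have hda : HasDerivAt (fun a : ℝ => Real.arsinh (c * a / Real.cos y))
        ((Real.sqrt (1 + (c * x / Real.cos y) ^ 2))⁻¹ * (c / Real.cos y)) x :=
      by have := (Real.hasDerivAt_arsinh (c * x / Real.cos y)).comp x hlin; exact this
    rw [hda.deriv, ← hsdef, ← hSdef]; ring
  have h2 : deriv (fun a => deriv (fun b => u a b) y) x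
      = e * Real.sin y * (s * (c / Real.cos y) / S) := by
    have hfn : (fun a => deriv (fun b => u a b) y)
        = fun a => e * Real.sin y * Real.sqrt (1 + (c * a / Real.cos y) ^ 2) := by
      funext a; exact (huy a y hcy).deriv
    rw [hfn]
    have hlin : HasDerivAt (fun a : ℝ => c * a / Real.cos y) (c / Real.cos y) x := by
      simpa [mul_div_assoc] using ((hasDerivAt_id x).const_mul c).div_const (Real.cos y)
    have hin : HasDerivAt (fun a : ℝ => 1 + (c * a / Real.cos y) ^ 2)
        (2 * s * (c / Real.cos y)) x := by
      have := ((hlin.pow 2).const_add 1)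
      simpa [hsdef, mul_comm, mul_assoc, mul_left_comm] using this
    have hsqrt : HasDerivAt (fun a : ℝ => Real.sqrt (1 + (c * a / Real.cos y) ^ 2))
        (2 * s * (c / Real.cos y) / (2 * S)) x := by
      have := hin.sqrt (x := x) (by positivity)
      simpa [← hsdef, ← hSdef] using this
    have hda := hsqrt.const_mul (e * Real.sin y)
    rw [hda.deriv]
    field_simp
  have h3 : deriv (fun a => deriv (fun b => u x b) a) y
      = e * (Real.cos y * S + Real.sin y * (s * (c * x * (Real.sin y / Real.cos y ^ 2))) / S) := by
    have hev : (fun a => deriv (fun b => u x b) a)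
        =ᶠ[nhds y] fun a => e * Real.sin a * Real.sqrt (1 + (c * x / Real.cos a) ^ 2) := by
      have hopen : IsOpen {t : ℝ | 0 < Real.cos t} :=
        isOpen_lt continuous_const Real.continuous_cos
      filter_upwards [hopen.mem_nhds hcy] with t ht
      exact (huy x t ht).deriv
    rw [hev.deriv_eq]
    have hsin : HasDerivAt (fun a : ℝ => e * Real.sin a) (e * Real.cos y) y :=
      (Real.hasDerivAt_sin y).const_mul e
    have hinv : HasDerivAt (fun t : ℝ => (Real.cos t)⁻¹)
        (Real.sin y / Real.cos y ^ 2) y := by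
      have := (Real.hasDerivAt_cos y).inv hcy'
      refine this.congr_deriv ?_
      field_simp
    have hinner : HasDerivAt (fun t : ℝ => c * x / Real.cos t)
        (c * x * (Real.sin y / Real.cos y ^ 2)) y := by
      simpa [div_eq_mul_inv] using hinv.const_mul (c * x)
    have hin : HasDerivAt (fun a : ℝ => 1 + (c * x / Real.cos a) ^ 2)
        (2 * s * (c * x * (Real.sin y / Real.cos y ^ 2))) y := by
      have := ((hinner.pow 2).const_add 1)
      simpa [hsdef, mul_comm, mul_assoc, mul_left_comm] using this
    have hsqrt : HasDerivAt (fun a : ℝ => Real.sqrt (1 + (c * x / Real.cos a) ^ 2))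
        (2 * s * (c * x * (Real.sin y / Real.cos y ^ 2)) / (2 * S)) y := by
      have := hin.sqrt (x := y) (by positivity)
      simpa [← hsdef, ← hSdef] using this
    have hda := hsin.fun_mul hsqrt
    rw [hda.deriv, ← hsdef, ← hSdef]
    field_simp
  rw [h1, h2, h3]
  have hsin2 : Real.sin y ^ 2 = 1 - Real.cos y ^ 2 := Real.sin_sq y
  have hsx : s * Real.cos y = c * x := by
    rw [hsdef]; field_simp
  rw [show c * x = s * Real.cos y from hsx.symm]
  field_simp
  linear_combination (Real.cos y ^ 2 * S ^ 2 -
    c * e * Real.sin y ^ 2 * s ^ 2) * hce
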